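/- Let G = (V, E) be a simple graph on vertex set V = {1, ..., n} and let m ≥ 2. Then G admits a proper m-coloring if and only if there exists a matrix X ∈ ℝ^{n×n} that is symmetric positive semidefinite, has rank at most m − 1, has every entry in {1, −1/(m−1)}, satisfies x_{ii} = 1 for all i ∈ V, and satisfies x_{ij} = −1/(m−1) for all {i, j} ∈ E. -/

import Mathlib

open Matrix Finset Module

/-- A graph `G` on `n` vertices admits a proper `m`-coloring if and only if
there exists a symmetric positive semidefinite matrix `X ∈ ℝ^{n×n}` of rank at most `m - 1`
with all entries in `{1, -1/(m-1)}`, ones on the diagonal, and `-1/(m-1)` at every edge. -/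
theorem stmt2 (n m : ℕ) (hm : 2 ≤ m) (G : SimpleGraph (Fin n)) :
    (∃ c : Fin n → Fin m, ∀ i j, G.Adj i j → c i ≠ c j) ↔
    (∃ X : Matrix (Fin n) (Fin n) ℝ,
      X.PosSemidef ∧
      X.rank ≤ m - 1 ∧
      (∀ i j, X i j = 1 ∨ X i j = -1 / ((m : ℝ) - 1)) ∧
      (∀ i, X i i = 1) ∧
      (∀ i j, G.Adj i j → X i j = -1 / ((m : ℝ) - 1))) := by
  have hm2 : (2 : ℝ) ≤ (m : ℝ) := by exact_mod_cast hm
  have hm1' : (0 : ℝ) < (m : ℝ) - 1 := by linarith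
  have hm0 : (0 : ℝ) < (m : ℝ) := by linarith
  have hne1 : -1 / ((m : ℝ) - 1) ≠ 1 := by
    have : -1 / ((m : ℝ) - 1) < 0 := div_neg_of_neg_of_pos (by norm_num) hm1'
    linarith
  constructor
  · rintro ⟨c, hc⟩
    set s : ℝ := Real.sqrt ((m : ℝ) / ((m : ℝ) - 1)) with hs
    have hs2 : s ^ 2 = (m : ℝ) / ((m : ℝ) - 1) := by
      rw [hs, Real.sq_sqrt (by positivity)]
    set A : Matrix (Fin m) (Fin n) ℝ :=
      Matrix.of (fun k i => s * ((if c i = k then 1 else 0) - 1 / (m : ℝ))) with hA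
    have hentry : ∀ i j, (Aᵀ * A) i j =
        if c i = c j then 1 else -1 / ((m : ℝ) - 1) := by
      intro i j
      have e0 : (Aᵀ * A) i j = ∑ k : Fin m,
          (s * ((if c i = k then 1 else 0) - 1 / (m : ℝ))) *
          (s * ((if c j = k then 1 else 0) - 1 / (m : ℝ))) := by
        simp [Matrix.mul_apply, hA]
      have expand : ∀ k : Fin m,
          (s * ((if c i = k then (1:ℝ) else 0) - 1 / (m : ℝ))) *
          (s * ((if c j = k then 1 else 0) - 1 / (m : ℝ))) =
          s ^ 2 * ((if c i = k then (1:ℝ) else 0) * (if c j = k then 1 else 0))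
          - s ^ 2 / m * (if c i = k then (1:ℝ) else 0)
          - s ^ 2 / m * (if c j = k then (1:ℝ) else 0)
          + s ^ 2 / m ^ 2 := by
        intro k; ring
      rw [e0, Finset.sum_congr rfl (fun k _ => expand k)]
      rw [Finset.sum_add_distrib, Finset.sum_sub_distrib, Finset.sum_sub_distrib,
        ← Finset.mul_sum, ← Finset.mul_sum, ← Finset.mul_sum,
        Finset.sum_const, Finset.card_univ, Fintype.card_fin]
      have hδi : ∑ k : Fin m, (if c i = k then (1:ℝ) else 0) = 1 := by simp
      have hδj : ∑ k : Fin m, (if c j = k then (1:ℝ) else 0) = 1 := by simp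
      rw [hδi, hδj]
      by_cases hij : c i = c j
      · have hp : ∑ k : Fin m, (if c i = k then (1:ℝ) else 0) * (if c j = k then 1 else 0)
            = 1 := by
          rw [← hij]
          have : ∀ k : Fin m, (if c i = k then (1:ℝ) else 0) * (if c i = k then 1 else 0)
              = if c i = k then 1 else 0 := by
            intro k; by_cases h : c i = k <;> simp [h]
          rw [Finset.sum_congr rfl (fun k _ => this k)]; simp
        rw [hp, if_pos hij, hs2]
        rw [nsmul_eq_mul]
        field_simp
        ring
      · have hp : ∑ k : Fin m, (if c i = k then (1:ℝ) else 0) * (if c j = k then 1 else 0)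
            = 0 := by
          apply Finset.sum_eq_zero
          intro k _
          by_cases h1 : c i = k
          · by_cases h2 : c j = k
            · exact absurd (h1.trans h2.symm) hij
            · simp [h2]
          · simp [h1]
        rw [hp, if_neg hij, hs2]
        rw [nsmul_eq_mul]
        field_simp
        ring
    refine ⟨Aᵀ * A, ?_, ?_, ?_, ?_, ?_⟩
    · simpa using Matrix.posSemidef_conjTranspose_mul_self A
    · rw [Matrix.rank_transpose_mul_self]
      set l : (Fin m → ℝ) →ₗ[ℝ] ℝ :=
        { toFun := fun v => ∑ k, v k
          map_add' := by intro x y; simp [Finset.sum_add_distrib]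
          map_smul' := by intro r x; simp [Finset.mul_sum] } with hl
      have hcolsum : ∀ i, ∑ k : Fin m, A k i = 0 := by
        intro i
        have e1 : ∑ k : Fin m, A k i
            = ∑ k : Fin m, (s * (if c i = k then (1:ℝ) else 0) - s / m) := by
          apply Finset.sum_congr rfl
          intro k _
          show s * ((if c i = k then (1:ℝ) else 0) - 1 / (m : ℝ)) = _
          ring
        rw [e1, Finset.sum_sub_distrib, ← Finset.mul_sum, Finset.sum_const,
          Finset.card_univ, Fintype.card_fin]
        have : ∑ k : Fin m, (if c i = k then (1:ℝ) else 0) = 1 := by simp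
        rw [this, nsmul_eq_mul]
        field_simp
        simp
      have hrange : LinearMap.range A.mulVecLin ≤ LinearMap.ker l := by
        rintro x ⟨v, rfl⟩
        simp only [LinearMap.mem_ker, hl, LinearMap.coe_mk, AddHom.coe_mk,
          Matrix.mulVecLin_apply]
        have : ∑ k : Fin m, (A.mulVec v) k = ∑ i : Fin n, (∑ k : Fin m, A k i) * v i := by
          simp only [Matrix.mulVec, dotProduct]
          rw [Finset.sum_comm]
          exact Finset.sum_congr rfl (fun i _ => by rw [Finset.sum_mul])
        rw [this]
        exact Finset.sum_eq_zero fun i _ => by rw [hcolsum i, zero_mul]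
      have hker : finrank ℝ (LinearMap.ker l) = m - 1 := by
        have hrn := LinearMap.finrank_range_add_finrank_ker l
        have hfr : finrank ℝ (Fin m → ℝ) = m := by
          rw [Module.finrank_fintype_fun_eq_card, Fintype.card_fin]
        have hrange1 : finrank ℝ (LinearMap.range l) = 1 := by
          have hne : LinearMap.range l ≠ ⊥ := by
            intro h
            have h1 : l (fun _ => 1) = 0 := by
              have : l (fun _ => 1) ∈ LinearMap.range l := LinearMap.mem_range_self _ _
              rw [h] at this; simpa using this
            simp [hl] at h1
            linarith
          have hle : finrank ℝ (LinearMap.range l) ≤ 1 := by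
            simpa using (LinearMap.range l).finrank_le
          have hge : 1 ≤ finrank ℝ (LinearMap.range l) := by
            rcases Nat.eq_zero_or_pos (finrank ℝ (LinearMap.range l)) with h0 | h
            · exact absurd (Submodule.finrank_eq_zero.mp h0) hne
            · exact h
          omega
        rw [hfr, hrange1] at hrn
        omega
      calc Matrix.rank A ≤ finrank ℝ (LinearMap.ker l) :=
            Submodule.finrank_mono hrange
        _ = m - 1 := hker
    · intro i j; rw [hentry]; by_cases h : c i = c j <;> simp [h]
    · intro i; rw [hentry]; simp
    · intro i j hadj; rw [hentry, if_neg (hc i j hadj)]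
  · rintro ⟨X, hPSD, hrank, hent, hdiag, hedge⟩
    obtain ⟨B, hB⟩ : ∃ B : Matrix (Fin n) (Fin n) ℝ, X = Bᴴ * B := by
      open scoped MatrixOrder in exact CStarAlgebra.nonneg_iff_eq_star_mul_self.mp hPSD.nonneg
    have hXij : ∀ i j, X i j = ∑ k, B k i * B k j := by
      intro i j
      rw [hB]
      simp [Matrix.mul_apply, Matrix.conjTranspose_apply]
    have rowEq : ∀ i j, X i j = 1 → ∀ k', X i k' = X j k' := by
      intro i j h
      have e : (∑ k, B k i * B k i) - 2 * (∑ k, B k i * B k j)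
          + (∑ k, B k j * B k j) = ∑ k, (B k i - B k j) ^ 2 := by
        rw [Finset.mul_sum, ← Finset.sum_sub_distrib, ← Finset.sum_add_distrib]
        exact Finset.sum_congr rfl fun k _ => by ring
      have hsum : ∑ k, (B k i - B k j) ^ 2 = 0 := by
        rw [← e, ← hXij, ← hXij, ← hXij, hdiag, hdiag, h]
        ring
      have hz : ∀ k, B k i = B k j := by
        intro k
        have h0 := (Finset.sum_eq_zero_iff_of_nonneg
          (fun k _ => sq_nonneg (B k i - B k j))).mp hsum k (Finset.mem_univ k)
        have := pow_eq_zero_iff (two_ne_zero) |>.mp h0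
        linarith
      intro k'
      rw [hXij, hXij]
      exact Finset.sum_congr rfl fun k _ => by rw [hz k]
    set row : Fin n → (Fin n → ℝ) := fun i => X i with hrow
    set S : Finset (Fin n → ℝ) := Finset.univ.image row with hSdef
    have hScard : S.card ≤ m := by
      by_contra hcon
      push_neg at hcon
      have hsec : ∀ x : {y // y ∈ S}, ∃ i : Fin n, row i = (x : Fin n → ℝ) := by
        rintro ⟨x, hx⟩
        obtain ⟨i, _, hi⟩ := Finset.mem_image.mp hx
        exact ⟨i, hi⟩
      choose f hf using hsec
      set U : Finset (Fin n) := Finset.univ.image f with hU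
      have hUcard : U.card = S.card := by
        rw [hU, Finset.card_image_of_injective _ (fun a b hab => by
          apply Subtype.ext
          rw [← hf a, ← hf b, hab])]
        simp
      have hUdist : ∀ i ∈ U, ∀ j ∈ U, i ≠ j → X i j = -1 / ((m : ℝ) - 1) := by
        intro i hi j hj hij
        rcases hent i j with h1 | h1
        · exfalso
          obtain ⟨a, _, ha⟩ := Finset.mem_image.mp hi
          obtain ⟨b, _, hb⟩ := Finset.mem_image.mp hj
          have hrows : row i = row j := funext (rowEq i j h1)
          rw [← ha, ← hb, hf a, hf b] at hrows
          have hab : a = b := Subtype.ext hrows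
          rw [← ha, ← hb, hab] at hij
          exact hij rfl
        · exact h1
      obtain ⟨T, hTU, hTcard⟩ := Finset.exists_subset_card_eq
        (show m + 1 ≤ U.card by omega)
      set v : Fin n → ℝ := fun i => if i ∈ T then 1 else 0 with hv
      have hq := hPSD.dotProduct_mulVec_nonneg v
      have hsv : star v = v := funext fun i => by simp [hv]
      rw [hsv] at hq
      have hval : v ⬝ᵥ X.mulVec v = ∑ i ∈ T, ∑ j ∈ T, X i j := by
        simp only [dotProduct, Matrix.mulVec, hv, ite_mul, one_mul, zero_mul,
          mul_ite, mul_one, mul_zero]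
        rw [Finset.sum_ite_mem, Finset.univ_inter]
        exact Finset.sum_congr rfl fun i _ => by
          rw [Finset.sum_ite_mem, Finset.univ_inter]
      have hTval : ∑ i ∈ T, ∑ j ∈ T, X i j
          = ((m : ℝ) + 1) * (1 + (m : ℝ) * (-1 / ((m : ℝ) - 1))) := by
        have hinner : ∀ i ∈ T, ∑ j ∈ T, X i j = 1 + (m : ℝ) * (-1 / ((m : ℝ) - 1)) := by
          intro i hi
          rw [← Finset.add_sum_erase T _ hi, hdiag]
          congr 1
          rw [Finset.sum_congr rfl (fun j hj => hUdist i (hTU hi) j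
            (hTU (Finset.mem_of_mem_erase hj)) (Finset.ne_of_mem_erase hj).symm),
            Finset.sum_const, Finset.card_erase_of_mem hi, hTcard]
          simp [nsmul_eq_mul]
        rw [Finset.sum_congr rfl hinner, Finset.sum_const, hTcard, nsmul_eq_mul]
        push_cast
        ring
      rw [hval, hTval] at hq
      have hneg : ((m : ℝ) + 1) * (1 + (m : ℝ) * (-1 / ((m : ℝ) - 1))) < 0 := by
        have h1 : 1 + (m : ℝ) * (-1 / ((m : ℝ) - 1)) = -1 / ((m : ℝ) - 1) := by
          field_simp
          ring
        rw [h1]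
        have h2 : -1 / ((m : ℝ) - 1) < 0 := div_neg_of_neg_of_pos (by norm_num) hm1'
        exact mul_neg_of_pos_of_neg (by linarith) h2
      linarith
    have hmem : ∀ i, row i ∈ S := fun i => Finset.mem_image_of_mem row (Finset.mem_univ i)
    refine ⟨fun i => Fin.castLE hScard (S.equivFin ⟨row i, hmem i⟩), ?_⟩
    intro i j hadj hcij
    have hre : row i = row j := by
      have h1 := Fin.castLE_injective hScard hcij
      have h2 := S.equivFin.injective h1
      exact congrArg Subtype.val h2
    have h1 : X i j = X j j := congrFun hre j
    rw [hdiag j, hedge i j hadj] at h1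
    exact hne1 h1
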